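/- For any ε ∈ (0,1), there exists a positive constant δ < 4ε such that f(x) = x - (1-ε)(1-e^{-x})(x+δ) > 0 for all x ∈ (0,∞). -/
import Mathlib


theorem tu_lemma (ε : ℝ) (hε : 0 < ε) (hε1 : ε < 1) :
    ∃ δ : ℝ, 0 < δ ∧ δ < 4 * ε ∧
      ∀ x : ℝ, 0 < x → x - (1 - ε) * (1 - Real.exp (-x)) * (x + δ) > 0 := by
  refine ⟨ε, hε, by linarith, fun x hx => ?_⟩
  have h1 := Real.exp_pos (-x)
  have h2 := Real.add_one_le_exp (-x)
  rcases le_or_gt x (1 - ε) with h | h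
  · -- x ≤ 1 - ε : use 1 - exp(-x) ≤ x and (1-ε)(x+ε) ≤ 1-ε < 1
    have h3 : 0 ≤ (1 - ε) * (x + ε) * (x - (1 - Real.exp (-x))) :=
      mul_nonneg (mul_nonneg (by linarith) (by linarith)) (by linarith)
    have h4 : 0 < x * (1 - (1 - ε) * (x + ε)) :=
      mul_pos hx (by nlinarith)
    nlinarith [h3, h4]
  · -- x > 1 - ε : (1-ε)(x+ε) ≤ x and exp(-x) > 0
    have h3 : 0 < ε * (x - 1 + ε) := mul_pos hε (by linarith)
    have h4 : 0 < (1 - ε) * (x + ε) * Real.exp (-x) :=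
      mul_pos (mul_pos (by linarith) (by linarith)) h1
    nlinarith [h3, h4]
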